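/- Let γ > 1, p > 0, v ∈ ℝ, and ρ₋, ρ₊ > 0 with ρ₋ ≠ ρ₊, and set u₋ = (ρ₋, v, p), u₊ = (ρ₊, v, p). If a vector (a, b, c) ∈ ℝ³ satisfies the entropy-conservation relation ⟦w⟧ · (a, b, c) = ⟦ψ⟧ together with the momentum relation b = v a + p, then c = (v²/2) a + (γ/(γ−1)) (p/ρ^log) a, where ρ^log = (ρ₊ − ρ₋)/(log ρ₊ − log ρ₋). -/

import Mathlib

noncomputable section
open Real

/-- A state `u = (ρ, v, p)` of the 1D compressible Euler equations:
density `u.1`, velocity `u.2.1`, pressure `u.2.2`. -/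
abbrev EulerState := ℝ × ℝ × ℝ

/-- Entropy variables `w(u)` for the entropy `U = -ρ s/(γ-1)`, `s = log(p/ρ^γ)`. -/
def entVar (γ : ℝ) (u : EulerState) : EulerState :=
  (γ/(γ-1) - Real.log (u.2.2 / u.1 ^ γ)/(γ-1) - u.1 * u.2.1^2/(2*u.2.2),
   u.1*u.2.1/u.2.2,
   -(u.1/u.2.2))

/-- Euclidean dot product on `ℝ × ℝ × ℝ`. -/
def dot3 (a b : EulerState) : ℝ := a.1*b.1 + a.2.1*b.2.1 + a.2.2*b.2.2

/-- Logarithmic mean `(a₊ - a₋)/(log a₊ - log a₋)`. -/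
def logMean (am ap : ℝ) : ℝ := (ap - am)/(Real.log ap - Real.log am)

/-- at a pressure equilibrium `u₋ = (ρ₋, v, p)`, `u₊ = (ρ₊, v, p)`
with `ρ₋ ≠ ρ₊`, any vector `(a, b, c)` satisfying the entropy-conservation
relation `⟦w⟧ ⬝ (a,b,c) = ⟦ψ⟧` and the momentum relation `b = v a + p`
satisfies `c = (v²/2) a + (γ/(γ-1)) (p/ρ^log) a`. -/
theorem ec_kep_pep_energy_flux
    (γ : ℝ) (hγ : 1 < γ) (p v ρm ρp : ℝ)
    (hp : 0 < p) (hρm : 0 < ρm) (hρp : 0 < ρp) (hne : ρm ≠ ρp)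
    (a b c : ℝ)
    (hEC : dot3 (entVar γ (ρp, v, p) - entVar γ (ρm, v, p)) (a, b, c)
            = ρp * v - ρm * v)
    (hmom : b = v * a + p) :
    c = (v^2/2) * a + (γ/(γ-1)) * (p / logMean ρm ρp) * a := by
  have hg : γ - 1 ≠ 0 := by linarith
  have hΔ : ρp - ρm ≠ 0 := sub_ne_zero.mpr (Ne.symm hne)
  have hL : Real.log ρp - Real.log ρm ≠ 0 := by
    intro h
    exact hne (Real.log_injOn_pos (Set.mem_Ioi.mpr hρm) (Set.mem_Ioi.mpr hρp)
      (by linarith))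
  have hlp : Real.log (p / ρp ^ γ) = Real.log p - γ * Real.log ρp := by
    rw [Real.log_div hp.ne' (by positivity : (ρp:ℝ) ^ γ ≠ 0), Real.log_rpow hρp]
  have hlm : Real.log (p / ρm ^ γ) = Real.log p - γ * Real.log ρm := by
    rw [Real.log_div hp.ne' (by positivity : (ρm:ℝ) ^ γ ≠ 0), Real.log_rpow hρm]
  simp only [dot3, entVar, Prod.fst_sub, Prod.snd_sub, hlp, hlm] at hEC
  rw [logMean]
  field_simp at hEC ⊢
  subst hmom
  have key : (p*p*p) * (c * (2 * ((γ-1) * (ρp - ρm)))) =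
      (p*p*p) * (v ^ 2 * a * ((γ-1) * (ρp - ρm)) + γ * (p * (Real.log ρp - Real.log ρm)) * a * 2) := by
    linear_combination (-(p*p*p)) * hEC
  have := mul_left_cancel₀ (by positivity : (p*p*p : ℝ) ≠ 0) key
  linarith
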